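/- Every finite-state automorphism of the regular rooted d-ary tree T of finite order has finite orbit-signalizer. In particular, if a finite-state automorphism has infinite orbit-signalizer, then it has infinite order. -/

import Mathlib

open List

/-- Vertices of the rooted `d`-ary tree `T`: finite words over the alphabet
`X = Fin d`. -/
abbrev Vertex (d : ℕ) := List (Fin d)

/-- `g` is an automorphism of the rooted `d`-ary tree: a bijection of the
vertex set `X*` preserving word length and the prefix relation. -/
def IsTreeAut {d : ℕ} (g : Equiv.Perm (Vertex d)) : Prop :=
  (∀ v : Vertex d, (g v).length = v.length) ∧
    ∀ v w : Vertex d, g v <+: g (v ++ w)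

theorem IsTreeAut.prefix_mono {d : ℕ} {g : Equiv.Perm (Vertex d)} (hg : IsTreeAut g)
    {u u' : Vertex d} (h : u <+: u') : g u <+: g u' := by
  obtain ⟨t, rfl⟩ := h
  exact hg.2 u t

/-- The automorphism group `Aut(T)` of the rooted `d`-ary tree, as a subgroup
of the group of permutations of the vertex set. -/
def treeAut (d : ℕ) : Subgroup (Equiv.Perm (Vertex d)) where
  carrier := {g | IsTreeAut g}
  one_mem' := ⟨fun _ => rfl, fun v w => ⟨w, rfl⟩⟩
  mul_mem' := by
    intro g h hg hh
    obtain ⟨hg1, hg2⟩ := hg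
    obtain ⟨hh1, hh2⟩ := hh
    refine ⟨fun v => ?_, fun v w => ?_⟩
    · simp [Equiv.Perm.mul_apply, hg1, hh1]
    · obtain ⟨t, ht⟩ := hh2 v w
      simp only [Equiv.Perm.mul_apply]
      rw [← ht]
      exact hg2 (h v) t
  inv_mem' := by
    intro g hgmem
    obtain ⟨hg1, hg2⟩ := hgmem
    have hg : IsTreeAut g := ⟨hg1, hg2⟩
    have hlen' : ∀ v : Vertex d, (g⁻¹ v).length = v.length := by
      intro v
      conv_rhs => rw [← show g (g⁻¹ v) = v from Equiv.apply_symm_apply g v]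
      rw [hg1]
    refine ⟨hlen', fun v w => ?_⟩
    have hle : (g⁻¹ v).length ≤ (g⁻¹ (v ++ w)).length := by
      have h1 := hlen' v
      have h2 := hlen' (v ++ w)
      rw [List.length_append] at h2
      omega
    have htp : (g⁻¹ (v ++ w)).take (g⁻¹ v).length <+: g⁻¹ (v ++ w) :=
      List.take_prefix _ _
    have hgtp : g ((g⁻¹ (v ++ w)).take (g⁻¹ v).length) <+: v ++ w := by
      have := hg.prefix_mono htp
      rwa [show g (g⁻¹ (v ++ w)) = v ++ w from Equiv.apply_symm_apply g (v ++ w)] at this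
    have hlen_tp : (g ((g⁻¹ (v ++ w)).take (g⁻¹ v).length)).length = v.length := by
      rw [hg1, List.length_take, min_eq_left hle, hlen' v]
    have hveq : g ((g⁻¹ (v ++ w)).take (g⁻¹ v).length) = v := by
      have h1 := List.prefix_iff_eq_take.mp hgtp
      have h2 := List.prefix_iff_eq_take.mp (List.prefix_append v w)
      rw [h1, hlen_tp]
      exact h2.symm
    have hkey : (g⁻¹ (v ++ w)).take (g⁻¹ v).length = g⁻¹ v := by
      apply g.injective
      rw [hveq, show g (g⁻¹ v) = v from Equiv.apply_symm_apply g v]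
    rw [← hkey]
    exact htp

open scoped Classical in
/-- The state (section) `g|_v` of `g` at the vertex `v` : the unique
automorphism satisfying `g (v ++ w) = g v ++ (g|_v) w` for all `w`. -/
noncomputable def state {d : ℕ} (g : Equiv.Perm (Vertex d)) (v : Vertex d) :
    Equiv.Perm (Vertex d) :=
  if h : Function.Bijective (fun w : Vertex d => (g (v ++ w)).drop v.length) then
    Equiv.ofBijective _ h
  else 1

/-- A finite-state automorphism: one having finitely many states.  The
finite-state automorphisms form the group `F(X)`. -/
def FiniteState {d : ℕ} (g : Equiv.Perm (Vertex d)) : Prop :=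
  (Set.range fun v : Vertex d => state g v).Finite

/-- The cardinality of the orbit `Orb_a(v)` of the vertex `v` under the cyclic
group generated by `a`. -/
noncomputable def orbitCard {d : ℕ} (a : Equiv.Perm (Vertex d)) (v : Vertex d) : ℕ :=
  Nat.card (Set.range fun n : ℤ => (a ^ n) v)

/-- The orbit-signalizer `OS(a) = { a^m|_v : v ∈ X^*, m = |Orb_a(v)| }`. -/
noncomputable def OS {d : ℕ} (a : Equiv.Perm (Vertex d)) : Set (Equiv.Perm (Vertex d)) :=
  {s | ∃ v : Vertex d, s = state (a ^ orbitCard a v) v}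

/-- `a` has finite orbit-signalizer. -/
def FiniteOS {d : ℕ} (a : Equiv.Perm (Vertex d)) : Prop := (OS a).Finite

/-- A self-similar (state-closed) subgroup. -/
def SelfSimilar {d : ℕ} (G : Subgroup (Equiv.Perm (Vertex d))) : Prop :=
  ∀ g ∈ G, ∀ v : Vertex d, state g v ∈ G

/-- A contracting group: there is a finite set `N ⊆ G` such that every
`g ∈ G` has all its states in `N` from some level on. -/
def ContractingGroup {d : ℕ} (G : Subgroup (Equiv.Perm (Vertex d))) : Prop :=
  ∃ N : Set (Equiv.Perm (Vertex d)), N.Finite ∧ N ⊆ (G : Set (Equiv.Perm (Vertex d))) ∧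
    ∀ g ∈ G, ∃ n : ℕ, ∀ v : Vertex d, n ≤ v.length → state g v ∈ N

/-- A contracting automorphism: the self-similar group generated by all of its
states is contracting. -/
def ContractingAut {d : ℕ} (f : Equiv.Perm (Vertex d)) : Prop :=
  ContractingGroup (Subgroup.closure (Set.range fun v : Vertex d => state f v))

/-- The activity sequence `θ_k(g)`: the number of vertices `v` of level `k`
whose state `g|_v` acts nontrivially on the first level `X`. -/
noncomputable def theta {d : ℕ} (g : Equiv.Perm (Vertex d)) (k : ℕ) : ℕ :=
  Nat.card {v : Vertex d // v.length = k ∧ ∃ x : Fin d, state g v [x] ≠ [x]}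

/-- A bounded automorphism: a finite-state automorphism with bounded activity
sequence.  The bounded automorphisms form the group `Pol(0)`. -/
def BoundedAut {d : ℕ} (g : Equiv.Perm (Vertex d)) : Prop :=
  FiniteState g ∧ ∃ C : ℕ, ∀ k : ℕ, theta g k ≤ C

/-- A polynomial automorphism (an element of `Pol(∞)`): a finite-state
automorphism whose activity sequence is polynomially bounded. -/
def PolyAut {d : ℕ} (g : Equiv.Perm (Vertex d)) : Prop :=
  FiniteState g ∧ ∃ p : Polynomial ℕ, ∀ k : ℕ, theta g k ≤ p.eval k

/-- A finitary automorphism (an element of `Pol(-1)`): all states at some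
level are trivial. -/
def Finitary {d : ℕ} (g : Equiv.Perm (Vertex d)) : Prop :=
  ∃ k : ℕ, ∀ v : Vertex d, v.length = k → state g v = 1

/-- A functionally recursive automorphism: a member of some finitely generated
self-similar subgroup of `Aut(T)`.  These form the group `FR(X)`. -/
def FunctionallyRecursive {d : ℕ} (g : Equiv.Perm (Vertex d)) : Prop :=
  ∃ G : Subgroup (Equiv.Perm (Vertex d)), G ≤ treeAut d ∧ SelfSimilar G ∧
    (∃ S : Set (Equiv.Perm (Vertex d)), S.Finite ∧ G = Subgroup.closure S) ∧ g ∈ G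
section Aux
variable {d : ℕ}

lemma IsTreeAut.mem_treeAut {g : Equiv.Perm (Vertex d)} (hg : IsTreeAut g) :
    g ∈ treeAut d := hg

lemma state_bijective {g : Equiv.Perm (Vertex d)} (hg : IsTreeAut g) (v : Vertex d) :
    Function.Bijective (fun w : Vertex d => (g (v ++ w)).drop v.length) := by
  have hginv : IsTreeAut g⁻¹ := (treeAut d).inv_mem hg.mem_treeAut
  have key : ∀ w : Vertex d, g (v ++ w) = g v ++ (g (v ++ w)).drop v.length := by
    intro w
    have hp : g v <+: g (v ++ w) := hg.2 v w
    have := List.prefix_iff_eq_take.mp hp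
    conv_lhs => rw [← List.take_append_drop (g v).length (g (v ++ w)), ← this, hg.1 v]
  constructor
  · intro w w' h
    have : g (v ++ w) = g (v ++ w') := by
      rw [key w, key w']
      exact congrArg _ h
    have := g.injective this
    exact List.append_cancel_left this
  · intro u
    set z := g⁻¹ (g v ++ u) with hz
    have hvz : v <+: z := by
      have := hginv.2 (g v) u
      rw [hz]
      simpa using this
    obtain ⟨t, ht⟩ := hvz
    refine ⟨t, ?_⟩
    have hgz : g (v ++ t) = g v ++ u := by rw [ht, hz, show g (g⁻¹ (g v ++ u)) = g v ++ u from Equiv.apply_symm_apply g _]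
    simp only [hgz]
    rw [← hg.1 v, List.drop_left]

lemma state_apply {g : Equiv.Perm (Vertex d)} (hg : IsTreeAut g) (v w : Vertex d) :
    state g v w = (g (v ++ w)).drop v.length := by
  rw [state, dif_pos (state_bijective hg v)]
  rfl

lemma state_spec {g : Equiv.Perm (Vertex d)} (hg : IsTreeAut g) (v w : Vertex d) :
    g (v ++ w) = g v ++ state g v w := by
  rw [state_apply hg]
  have hp : g v <+: g (v ++ w) := hg.2 v w
  have := List.prefix_iff_eq_take.mp hp
  conv_lhs => rw [← List.take_append_drop (g v).length (g (v ++ w)), ← this, hg.1 v]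

lemma state_one (v : Vertex d) : state (1 : Equiv.Perm (Vertex d)) v = 1 := by
  have h1 : IsTreeAut (1 : Equiv.Perm (Vertex d)) := (treeAut d).one_mem
  refine Equiv.ext fun w => ?_
  rw [state_apply h1]
  simp [List.drop_left]

lemma state_mul {g h : Equiv.Perm (Vertex d)} (hg : IsTreeAut g) (hh : IsTreeAut h)
    (v : Vertex d) : state (g * h) v = state g (h v) * state h v := by
  have hgh : IsTreeAut (g * h) := (treeAut d).mul_mem hg.mem_treeAut hh.mem_treeAut
  refine Equiv.ext fun w => ?_
  have h1 : (g * h) (v ++ w) = g (h v ++ state h v w) := by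
    simp only [Equiv.Perm.mul_apply]
    rw [state_spec hh v w]
  have h2 : g (h v ++ state h v w) = g (h v) ++ state g (h v) (state h v w) :=
    state_spec hg (h v) _
  rw [state_apply hgh, h1, h2, Equiv.Perm.mul_apply]
  rw [← hh.1 v, ← hg.1 (h v)]
  exact List.drop_left

lemma finiteState_mul {g h : Equiv.Perm (Vertex d)} (hg : IsTreeAut g) (hh : IsTreeAut h)
    (fg : FiniteState g) (fh : FiniteState h) : FiniteState (g * h) := by
  apply Set.Finite.subset (Set.Finite.image2 (· * ·) fg fh)
  rintro s ⟨v, rfl⟩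
  exact ⟨state g (h v), ⟨h v, rfl⟩, state h v, ⟨v, rfl⟩, (state_mul hg hh v).symm⟩

lemma finiteState_pow {a : Equiv.Perm (Vertex d)} (ha : IsTreeAut a) (hfa : FiniteState a)
    (m : ℕ) : FiniteState (a ^ m) := by
  induction m with
  | zero =>
      simp only [pow_zero]
      have : Set.range (fun v : Vertex d => state (1 : Equiv.Perm (Vertex d)) v) ⊆ {1} := by
        rintro s ⟨v, rfl⟩; simp [state_one]
      exact Set.Finite.subset (Set.finite_singleton 1) this
  | succ m ih =>
      rw [pow_succ]
      exact finiteState_mul ((treeAut d).pow_mem ha.mem_treeAut m) ha ih hfa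

lemma orbitCard_le {a : Equiv.Perm (Vertex d)} (hfin : IsOfFinOrder a) (v : Vertex d) :
    orbitCard a v ≤ orderOf a := by
  set n := orderOf a with hn
  have hnpos : 0 < n := hfin.orderOf_pos
  have hsub : Set.range (fun k : ℤ => (a ^ k) v)
      ⊆ Set.range (fun m : Fin n => (a ^ (m : ℕ)) v) := by
    rintro x ⟨k, rfl⟩
    have hne : (n : ℤ) ≠ 0 := by exact_mod_cast hnpos.ne'
    have hmod : 0 ≤ k % (n : ℤ) := Int.emod_nonneg k hne
    have hlt : k % (n : ℤ) < n := Int.emod_lt_of_pos k (by exact_mod_cast hnpos)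
    refine ⟨⟨(k % (n : ℤ)).toNat, ?_⟩, ?_⟩
    · omega
    · simp only
      have : (a ^ ((k % (n : ℤ)).toNat) : Equiv.Perm (Vertex d)) = a ^ k := by
        rw [← zpow_natCast, Int.toNat_of_nonneg hmod, hn, zpow_mod_orderOf]
      rw [this]
  calc orbitCard a v ≤ Nat.card (Set.range (fun m : Fin n => (a ^ (m : ℕ)) v)) := by
        apply Nat.card_mono (Set.finite_range _) hsub
    _ ≤ Nat.card (Fin n) := Finite.card_range_le _
    _ = n := by simp

end Aux

/-- Every finite-state automorphism of finite order has
finite orbit-signalizer; in particular a finite-state automorphism with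
infinite orbit-signalizer has infinite order. -/
theorem finiteOS_of_finiteState_finiteOrder
    (d : ℕ) (hd : 2 ≤ d) (a : Equiv.Perm (Vertex d))
    (ha : IsTreeAut a) (hfa : FiniteState a) :
    (IsOfFinOrder a → FiniteOS a) ∧ (¬ FiniteOS a → ¬ IsOfFinOrder a) := by
  have main : IsOfFinOrder a → FiniteOS a := by
    intro hfin
    set n := orderOf a with hn
    have hsub : OS a ⊆ ⋃ m ∈ Finset.range (n + 1),
        Set.range (fun v : Vertex d => state (a ^ m) v) := by
      rintro s ⟨v, rfl⟩
      have hle : orbitCard a v ≤ n := orbitCard_le hfin v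
      exact Set.mem_biUnion (Finset.mem_range.mpr (by omega)) ⟨v, rfl⟩
    refine Set.Finite.subset ?_ hsub
    apply Set.Finite.biUnion (Finset.finite_toSet _)
    intro m _
    exact finiteState_pow ha hfa m
  exact ⟨main, fun h hfin => h (main hfin)⟩
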